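/- Let e={u,v} be an edge of a finite simple undirected graph G. The number of unordered pairs {v1,v2} ⊆ adj({u,v}) such that the subgraph induced on {u,v,v1,v2} is a tailed triangle (a triangle with one additional pendant vertex attached to one triangle vertex) equals (n_x + n_y)·n_z − m(X,Z) − m(Y,Z) + m(X,X) + m(Y,Y) (Theorem 2, Table 3, tailed-triangle row). -/

import Mathlib

open Finset

variable {V : Type*}

/-- `X` for edge `{u,v}`: neighbors of `u` other than `v` that are not neighbors of `v`. -/
def eX [Fintype V] [DecidableEq V] (G : SimpleGraph V) [DecidableRel G.Adj] (u v : V) :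
    Finset V :=
  univ.filter fun w => w ≠ v ∧ G.Adj u w ∧ ¬ G.Adj v w

/-- `Y` for edge `{u,v}`: neighbors of `v` other than `u` that are not neighbors of `u`. -/
def eY [Fintype V] [DecidableEq V] (G : SimpleGraph V) [DecidableRel G.Adj] (u v : V) :
    Finset V :=
  univ.filter fun w => w ≠ u ∧ G.Adj v w ∧ ¬ G.Adj u w

/-- `Z` for edge `{u,v}`: common neighbors of `u` and `v`. -/
def eZ [Fintype V] [DecidableEq V] (G : SimpleGraph V) [DecidableRel G.Adj] (u v : V) :
    Finset V :=
  univ.filter fun w => G.Adj u w ∧ G.Adj v w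

/-- `m(S,T)`: the number of edges of `G` with one endpoint in `S` and the other in `T`. -/
def mE [DecidableEq V] (G : SimpleGraph V) [DecidableRel G.Adj] (S T : Finset V) : ℕ :=
  (((S ×ˢ T).filter fun p => G.Adj p.1 p.2).image fun p => ({p.1, p.2} : Finset V)).card

/-- `adj(W)`: vertices outside `W` having a neighbor in `W`. -/
def adjW [Fintype V] [DecidableEq V] (G : SimpleGraph V) [DecidableRel G.Adj] (W : Finset V) :
    Finset V :=
  univ.filter fun x => x ∉ W ∧ ∃ w ∈ W, G.Adj x w

/-! ### Auxiliary lemmas -/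

lemma card_eq_two_mul_image_pair [DecidableEq V] (s : Finset (V × V)) (hne : ∀ p ∈ s, p.1 ≠ p.2)
    (hsymm : ∀ p ∈ s, (p.2, p.1) ∈ s) :
    s.card = 2 * (s.image fun p => ({p.1, p.2} : Finset V)).card := by
  rw [Finset.card_eq_sum_card_image (fun p => ({p.1, p.2} : Finset V)) s]
  rw [Finset.sum_congr rfl (g := fun _ => 2), Finset.sum_const, smul_eq_mul, mul_comm]
  intro b hb
  obtain ⟨p, hp, rfl⟩ := Finset.mem_image.mp hb
  have hfib : s.filter (fun q => ({q.1, q.2} : Finset V) = {p.1, p.2}) = {p, (p.2, p.1)} := by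
    ext q
    simp only [Finset.mem_filter, Finset.mem_insert, Finset.mem_singleton]
    constructor
    · rintro ⟨hq, hqp⟩
      have h1 : q.1 = p.1 ∨ q.1 = p.2 := by
        have : q.1 ∈ ({p.1, p.2} : Finset V) := hqp ▸ (by simp)
        simpa using this
      have h2 : q.2 = p.1 ∨ q.2 = p.2 := by
        have : q.2 ∈ ({p.1, p.2} : Finset V) := hqp ▸ (by simp)
        simpa using this
      have hq12 := hne q hq
      rcases h1 with h1 | h1 <;> rcases h2 with h2 | h2
      · exact absurd (h1.trans h2.symm) hq12
      · left; exact Prod.ext h1 h2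
      · right; exact Prod.ext h1 h2
      · exact absurd (h1.trans h2.symm) hq12
    · rintro (rfl | rfl)
      · exact ⟨hp, rfl⟩
      · exact ⟨hsymm p hp, by simp [Finset.pair_comm]⟩
  rw [hfib, Finset.card_insert_of_notMem, Finset.card_singleton]
  simp only [Finset.mem_singleton]
  intro h
  exact hne p hp (congrArg Prod.fst h)

/-- raw 6-way disjunction describing the tailed-triangle pair types -/
def Pr (G : SimpleGraph V) (u v p1 p2 : V) : Prop :=
    ((p1 ≠ v ∧ G.Adj u p1 ∧ ¬ G.Adj v p1) ∧ (G.Adj u p2 ∧ G.Adj v p2) ∧ ¬ G.Adj p1 p2)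
  ∨ ((p1 ≠ u ∧ G.Adj v p1 ∧ ¬ G.Adj u p1) ∧ (G.Adj u p2 ∧ G.Adj v p2) ∧ ¬ G.Adj p1 p2)
  ∨ ((G.Adj u p1 ∧ G.Adj v p1) ∧ (p2 ≠ v ∧ G.Adj u p2 ∧ ¬ G.Adj v p2) ∧ ¬ G.Adj p1 p2)
  ∨ ((G.Adj u p1 ∧ G.Adj v p1) ∧ (p2 ≠ u ∧ G.Adj v p2 ∧ ¬ G.Adj u p2) ∧ ¬ G.Adj p1 p2)
  ∨ ((p1 ≠ v ∧ G.Adj u p1 ∧ ¬ G.Adj v p1) ∧ (p2 ≠ v ∧ G.Adj u p2 ∧ ¬ G.Adj v p2) ∧ G.Adj p1 p2)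
  ∨ ((p1 ≠ u ∧ G.Adj v p1 ∧ ¬ G.Adj u p1) ∧ (p2 ≠ u ∧ G.Adj v p2 ∧ ¬ G.Adj u p2) ∧ G.Adj p1 p2)

lemma core_fwd [DecidableEq V] (G : SimpleGraph V) (u v p1 p2 : V) (huv : G.Adj u v)
    (h1u : p1 ≠ u) (h1v : p1 ≠ v) (h2u : p2 ≠ u) (h2v : p2 ≠ v) (h12 : p1 ≠ p2)
    (hadj1 : G.Adj u p1 ∨ G.Adj v p1) (hadj2 : G.Adj u p2 ∨ G.Adj v p2)
    (a b c d : V) (hset : ({a, b, c, d} : Finset V) = {u, v, p1, p2})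
    (hab : G.Adj a b) (hac : G.Adj a c) (hbc : G.Adj b c) (had : G.Adj a d)
    (hbd : ¬ G.Adj b d) (hcd : ¬ G.Adj c d) :
    Pr G u v p1 p2 := by
  have hvu := huv.symm
  have hba := hab.symm
  have hca := hac.symm
  have hcb := hbc.symm
  have hda := had.symm
  have hdb : ¬ G.Adj d b := fun h => hbd h.symm
  have hdc : ¬ G.Adj d c := fun h => hcd h.symm
  have hu : u = a ∨ u = b ∨ u = c ∨ u = d := by
    have : u ∈ ({a, b, c, d} : Finset V) := hset ▸ (by simp)
    simpa using this
  have hv : v = a ∨ v = b ∨ v = c ∨ v = d := by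
    have : v ∈ ({a, b, c, d} : Finset V) := hset ▸ (by simp)
    simpa using this
  have h1 : p1 = a ∨ p1 = b ∨ p1 = c ∨ p1 = d := by
    have : p1 ∈ ({a, b, c, d} : Finset V) := hset ▸ (by simp)
    simpa using this
  have h2 : p2 = a ∨ p2 = b ∨ p2 = c ∨ p2 = d := by
    have : p2 ∈ ({a, b, c, d} : Finset V) := hset ▸ (by simp)
    simpa using this
  unfold Pr
  clear hset
  rcases hu with rfl | rfl | rfl | rfl <;> rcases hv with rfl | rfl | rfl | rfl <;>
    rcases h1 with rfl | rfl | rfl | rfl <;> rcases h2 with rfl | rfl | rfl | rfl <;>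
    first
    | contradiction
    | exact (G.irrefl huv).elim
    | exact hadj1.elim (fun h => absurd h ‹_›) (fun h => absurd h ‹_›)
    | exact hadj2.elim (fun h => absurd h ‹_›) (fun h => absurd h ‹_›)
    | exact Or.inl ⟨⟨‹_›, ‹_›, ‹_›⟩, ⟨‹_›, ‹_›⟩, ‹_›⟩
    | exact Or.inr (Or.inl ⟨⟨‹_›, ‹_›, ‹_›⟩, ⟨‹_›, ‹_›⟩, ‹_›⟩)
    | exact Or.inr (Or.inr (Or.inl ⟨⟨‹_›, ‹_›⟩, ⟨‹_›, ‹_›, ‹_›⟩, ‹_›⟩))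
    | exact Or.inr (Or.inr (Or.inr (Or.inl ⟨⟨‹_›, ‹_›⟩, ⟨‹_›, ‹_›, ‹_›⟩, ‹_›⟩)))
    | exact Or.inr (Or.inr (Or.inr (Or.inr (Or.inl ⟨⟨‹_›, ‹_›, ‹_›⟩, ⟨‹_›, ‹_›, ‹_›⟩, ‹_›⟩))))
    | exact Or.inr (Or.inr (Or.inr (Or.inr (Or.inr ⟨⟨‹_›, ‹_›, ‹_›⟩, ⟨‹_›, ‹_›, ‹_›⟩, ‹_›⟩))))

lemma mem_adjW_pair_iff [Fintype V] [DecidableEq V] (G : SimpleGraph V) [DecidableRel G.Adj]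
    (u v x : V) :
    x ∈ adjW G {u, v} ↔ x ≠ u ∧ x ≠ v ∧ (G.Adj u x ∨ G.Adj v x) := by
  simp only [adjW, Finset.mem_filter, Finset.mem_univ, true_and, Finset.mem_insert,
    Finset.mem_singleton]
  constructor
  · rintro ⟨hx, w, hw, hadj⟩
    refine ⟨fun h => hx (Or.inl h), fun h => hx (Or.inr h), ?_⟩
    rcases hw with rfl | rfl
    · exact Or.inl hadj.symm
    · exact Or.inr hadj.symm
  · rintro ⟨hxu, hxv, h | h⟩
    · exact ⟨by tauto, u, Or.inl rfl, h.symm⟩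
    · exact ⟨by tauto, v, Or.inr rfl, h.symm⟩

lemma mem_A_iff [Fintype V] [DecidableEq V] (G : SimpleGraph V) [DecidableRel G.Adj]
    (u v : V) (huv : G.Adj u v) (p : V × V) :
    (p ∈ ((adjW G {u, v}) ×ˢ (adjW G {u, v})).filter fun p =>
        p.1 ≠ p.2 ∧
        ∃ a b c d : V, ({a, b, c, d} : Finset V) = {u, v, p.1, p.2} ∧
          G.Adj a b ∧ G.Adj a c ∧ G.Adj b c ∧ G.Adj a d ∧ ¬ G.Adj b d ∧ ¬ G.Adj c d)
      ↔ Pr G u v p.1 p.2 := by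
  obtain ⟨p1, p2⟩ := p
  simp only [Finset.mem_filter, Finset.mem_product]
  constructor
  · rintro ⟨⟨hm1, hm2⟩, h12, a, b, c, d, hset, hab, hac, hbc, had, hbd, hcd⟩
    rw [mem_adjW_pair_iff] at hm1 hm2
    exact core_fwd G u v p1 p2 huv hm1.1 hm1.2.1 hm2.1 hm2.2.1 h12 hm1.2.2 hm2.2.2
      a b c d hset hab hac hbc had hbd hcd
  · intro hPr
    have e1 : ({u, v, p2, p1} : Finset V) = {u, v, p1, p2} := by ext t; simp; tauto
    have e2 : ({v, u, p2, p1} : Finset V) = {u, v, p1, p2} := by ext t; simp; tauto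
    have e3 : ({v, u, p1, p2} : Finset V) = {u, v, p1, p2} := by ext t; simp; tauto
    have e4 : ({u, p1, p2, v} : Finset V) = {u, v, p1, p2} := by ext t; simp; tauto
    have e5 : ({v, p1, p2, u} : Finset V) = {u, v, p1, p2} := by ext t; simp; tauto
    rcases hPr with ⟨⟨h1v, ha1, hn1⟩, ⟨ha2, hb2⟩, hn12⟩ |
        ⟨⟨h1u, hb1, hn1⟩, ⟨ha2, hb2⟩, hn12⟩ |
        ⟨⟨ha1, hb1⟩, ⟨h2v, ha2, hn2⟩, hn12⟩ |
        ⟨⟨ha1, hb1⟩, ⟨h2u, hb2, hn2⟩, hn12⟩ |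
        ⟨⟨h1v, ha1, hn1⟩, ⟨h2v, ha2, hn2⟩, h12⟩ |
        ⟨⟨h1u, hb1, hn1⟩, ⟨h2u, hb2, hn2⟩, h12⟩
    · exact ⟨⟨(mem_adjW_pair_iff G u v p1).mpr ⟨ha1.ne', h1v, Or.inl ha1⟩,
        (mem_adjW_pair_iff G u v p2).mpr ⟨ha2.ne', hb2.ne', Or.inl ha2⟩⟩,
        fun h => hn1 (by rw [h]; exact hb2), u, v, p2, p1, e1, huv, ha2, hb2, ha1, hn1,
        fun h => hn12 h.symm⟩
    · exact ⟨⟨(mem_adjW_pair_iff G u v p1).mpr ⟨h1u, hb1.ne', Or.inr hb1⟩,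
        (mem_adjW_pair_iff G u v p2).mpr ⟨ha2.ne', hb2.ne', Or.inl ha2⟩⟩,
        fun h => hn1 (by rw [h]; exact ha2), v, u, p2, p1, e2, huv.symm, hb2, ha2, hb1, hn1,
        fun h => hn12 h.symm⟩
    · exact ⟨⟨(mem_adjW_pair_iff G u v p1).mpr ⟨ha1.ne', hb1.ne', Or.inl ha1⟩,
        (mem_adjW_pair_iff G u v p2).mpr ⟨ha2.ne', h2v, Or.inl ha2⟩⟩,
        fun h => hn2 (by rw [← h]; exact hb1), u, v, p1, p2, rfl, huv, ha1, hb1, ha2, hn2, hn12⟩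
    · exact ⟨⟨(mem_adjW_pair_iff G u v p1).mpr ⟨ha1.ne', hb1.ne', Or.inl ha1⟩,
        (mem_adjW_pair_iff G u v p2).mpr ⟨h2u, hb2.ne', Or.inr hb2⟩⟩,
        fun h => hn2 (by rw [← h]; exact ha1), v, u, p1, p2, e3, huv.symm, hb1, ha1, hb2, hn2,
        hn12⟩
    · exact ⟨⟨(mem_adjW_pair_iff G u v p1).mpr ⟨ha1.ne', h1v, Or.inl ha1⟩,
        (mem_adjW_pair_iff G u v p2).mpr ⟨ha2.ne', h2v, Or.inl ha2⟩⟩,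
        h12.ne, u, p1, p2, v, e4, ha1, ha2, h12, huv, fun h => hn1 h.symm, fun h => hn2 h.symm⟩
    · exact ⟨⟨(mem_adjW_pair_iff G u v p1).mpr ⟨h1u, hb1.ne', Or.inr hb1⟩,
        (mem_adjW_pair_iff G u v p2).mpr ⟨h2u, hb2.ne', Or.inr hb2⟩⟩,
        h12.ne, v, p1, p2, u, e5, hb1, hb2, h12, huv.symm, fun h => hn1 h.symm,
        fun h => hn2 h.symm⟩

lemma disj_filter_prod [DecidableEq V] {S1 T1 S2 T2 : Finset V} {q1 q2 : V × V → Prop}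
    [DecidablePred q1] [DecidablePred q2]
    (h : ∀ x y, x ∈ S1 → y ∈ T1 → x ∈ S2 → y ∈ T2 → False) :
    Disjoint ((S1 ×ˢ T1).filter q1) ((S2 ×ˢ T2).filter q2) := by
  rw [Finset.disjoint_left]
  rintro ⟨x, y⟩ hp hq
  simp only [Finset.mem_filter, Finset.mem_product] at hp hq
  exact h x y hp.1.1 hp.1.2 hq.1.1 hq.1.2

lemma card_filter_prod_swap [DecidableEq V] (G : SimpleGraph V) [DecidableRel G.Adj]
    (S T : Finset V) :
    ((S ×ˢ T).filter fun p => ¬ G.Adj p.1 p.2).card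
      = ((T ×ˢ S).filter fun p => ¬ G.Adj p.1 p.2).card := by
  apply Finset.card_bij (fun p _ => (p.2, p.1))
  · intro p hp
    simp only [Finset.mem_filter, Finset.mem_product] at *
    exact ⟨⟨hp.1.2, hp.1.1⟩, fun h => hp.2 h.symm⟩
  · intro p hp q hq h
    exact Prod.ext (congrArg Prod.snd h) (congrArg Prod.fst h)
  · intro p hp
    refine ⟨(p.2, p.1), ?_, rfl⟩
    simp only [Finset.mem_filter, Finset.mem_product] at *
    exact ⟨⟨hp.1.2, hp.1.1⟩, fun h => hp.2 h.symm⟩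

lemma mE_eq_card_of_disjoint [DecidableEq V] (G : SimpleGraph V) [DecidableRel G.Adj]
    {S T : Finset V} (h : ∀ w, w ∈ S → w ∈ T → False) :
    mE G S T = ((S ×ˢ T).filter fun p => G.Adj p.1 p.2).card := by
  unfold mE
  apply Finset.card_image_of_injOn
  intro p hp q hq hpq
  simp only [Finset.coe_filter, Set.mem_setOf_eq, Finset.mem_product] at hp hq
  have hpq' : ({p.1, p.2} : Finset V) = {q.1, q.2} := hpq
  have hp1 : p.1 = q.1 ∨ p.1 = q.2 := by
    have : p.1 ∈ ({q.1, q.2} : Finset V) := hpq' ▸ (by simp)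
    simpa using this
  have hp2 : p.2 = q.1 ∨ p.2 = q.2 := by
    have : p.2 ∈ ({q.1, q.2} : Finset V) := hpq' ▸ (by simp)
    simpa using this
  rcases hp1 with h1 | h1
  · rcases hp2 with h2 | h2
    · exact absurd (h2 ▸ hp.1.2) (fun hm => h p.2 (h2 ▸ hq.1.1) hm)
    · exact Prod.ext h1 h2
  · exact absurd (h1 ▸ hp.1.1) (fun hm => h p.1 hm (h1 ▸ hq.1.2))

lemma mE_diag [DecidableEq V] (G : SimpleGraph V) [DecidableRel G.Adj] (S : Finset V) :
    ((S ×ˢ S).filter fun p => G.Adj p.1 p.2).card = 2 * mE G S S := by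
  apply card_eq_two_mul_image_pair
  · intro p hp
    exact G.ne_of_adj (Finset.mem_filter.mp hp).2
  · intro p hp
    simp only [Finset.mem_filter, Finset.mem_product] at *
    exact ⟨⟨hp.1.2, hp.1.1⟩, hp.2.symm⟩


lemma hXZ' [Fintype V] [DecidableEq V] (G : SimpleGraph V) [DecidableRel G.Adj] (u v : V) :
    ∀ w, w ∈ eX G u v → w ∈ eZ G u v → False := by
  intro w hw1 hw2
  simp only [eX, eZ, Finset.mem_filter, Finset.mem_univ, true_and] at hw1 hw2
  tauto

lemma hYZ' [Fintype V] [DecidableEq V] (G : SimpleGraph V) [DecidableRel G.Adj] (u v : V) :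
    ∀ w, w ∈ eY G u v → w ∈ eZ G u v → False := by
  intro w hw1 hw2
  simp only [eY, eZ, Finset.mem_filter, Finset.mem_univ, true_and] at hw1 hw2
  tauto

lemma hXY' [Fintype V] [DecidableEq V] (G : SimpleGraph V) [DecidableRel G.Adj] (u v : V) :
    ∀ w, w ∈ eX G u v → w ∈ eY G u v → False := by
  intro w hw1 hw2
  simp only [eX, eY, Finset.mem_filter, Finset.mem_univ, true_and] at hw1 hw2
  tauto

set_option maxHeartbeats 1000000 in
lemma pr_iff_union [Fintype V] [DecidableEq V] (G : SimpleGraph V) [DecidableRel G.Adj]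
    (u v : V) (huv : G.Adj u v) (p : V × V) :
    Pr G u v p.1 p.2 ↔ p ∈ ((eX G u v ×ˢ eZ G u v).filter fun p => ¬ G.Adj p.1 p.2)
      ∪ (((eY G u v ×ˢ eZ G u v).filter fun p => ¬ G.Adj p.1 p.2)
      ∪ (((eZ G u v ×ˢ eX G u v).filter fun p => ¬ G.Adj p.1 p.2)
      ∪ (((eZ G u v ×ˢ eY G u v).filter fun p => ¬ G.Adj p.1 p.2)
      ∪ (((eX G u v ×ˢ eX G u v).filter fun p => G.Adj p.1 p.2)
      ∪ ((eY G u v ×ˢ eY G u v).filter fun p => G.Adj p.1 p.2))))) := by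
  simp only [Pr, eX, eY, eZ, Finset.mem_union, Finset.mem_filter,
    Finset.mem_product, Finset.mem_univ, true_and, and_assoc]

lemma A_eq_union [Fintype V] [DecidableEq V] (G : SimpleGraph V) [DecidableRel G.Adj]
    (u v : V) (huv : G.Adj u v) :
    (((adjW G {u, v}) ×ˢ (adjW G {u, v})).filter fun p =>
        p.1 ≠ p.2 ∧
        ∃ a b c d : V, ({a, b, c, d} : Finset V) = {u, v, p.1, p.2} ∧
          G.Adj a b ∧ G.Adj a c ∧ G.Adj b c ∧ G.Adj a d ∧ ¬ G.Adj b d ∧ ¬ G.Adj c d)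
      = ((eX G u v ×ˢ eZ G u v).filter fun p => ¬ G.Adj p.1 p.2)
      ∪ (((eY G u v ×ˢ eZ G u v).filter fun p => ¬ G.Adj p.1 p.2)
      ∪ (((eZ G u v ×ˢ eX G u v).filter fun p => ¬ G.Adj p.1 p.2)
      ∪ (((eZ G u v ×ˢ eY G u v).filter fun p => ¬ G.Adj p.1 p.2)
      ∪ (((eX G u v ×ˢ eX G u v).filter fun p => G.Adj p.1 p.2)
      ∪ ((eY G u v ×ˢ eY G u v).filter fun p => G.Adj p.1 p.2))))) :=
  Finset.ext fun p => (mem_A_iff G u v huv p).trans (pr_iff_union G u v huv p)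

lemma A_two_to_one [Fintype V] [DecidableEq V] (G : SimpleGraph V) [DecidableRel G.Adj]
    (u v : V) :
    (((adjW G {u, v}) ×ˢ (adjW G {u, v})).filter fun p =>
        p.1 ≠ p.2 ∧
        ∃ a b c d : V, ({a, b, c, d} : Finset V) = {u, v, p.1, p.2} ∧
          G.Adj a b ∧ G.Adj a c ∧ G.Adj b c ∧ G.Adj a d ∧ ¬ G.Adj b d ∧ ¬ G.Adj c d).card
      = 2 * ((((adjW G {u, v}) ×ˢ (adjW G {u, v})).filter fun p =>
        p.1 ≠ p.2 ∧
        ∃ a b c d : V, ({a, b, c, d} : Finset V) = {u, v, p.1, p.2} ∧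
          G.Adj a b ∧ G.Adj a c ∧ G.Adj b c ∧ G.Adj a d ∧ ¬ G.Adj b d ∧ ¬ G.Adj c d).image
      fun p => ({p.1, p.2} : Finset V)).card := by
  apply card_eq_two_mul_image_pair
  · intro p hp
    exact ((Finset.mem_filter.mp hp).2).1
  · intro p hp
    rw [Finset.mem_filter, Finset.mem_product] at hp ⊢
    obtain ⟨⟨hm1, hm2⟩, h12, a, b, c, d, hset, hrest⟩ := hp
    refine ⟨⟨hm2, hm1⟩, h12.symm, a, b, c, d, ?_, hrest⟩
    rw [hset]
    ext t; simp; tauto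

lemma union_card [Fintype V] [DecidableEq V] (G : SimpleGraph V) [DecidableRel G.Adj]
    (u v : V) :
    (((eX G u v ×ˢ eZ G u v).filter fun p => ¬ G.Adj p.1 p.2)
      ∪ (((eY G u v ×ˢ eZ G u v).filter fun p => ¬ G.Adj p.1 p.2)
      ∪ (((eZ G u v ×ˢ eX G u v).filter fun p => ¬ G.Adj p.1 p.2)
      ∪ (((eZ G u v ×ˢ eY G u v).filter fun p => ¬ G.Adj p.1 p.2)
      ∪ (((eX G u v ×ˢ eX G u v).filter fun p => G.Adj p.1 p.2)
      ∪ ((eY G u v ×ˢ eY G u v).filter fun p => G.Adj p.1 p.2)))))).card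
    = ((eX G u v ×ˢ eZ G u v).filter fun p => ¬ G.Adj p.1 p.2).card
      + ((eY G u v ×ˢ eZ G u v).filter fun p => ¬ G.Adj p.1 p.2).card
      + ((eZ G u v ×ˢ eX G u v).filter fun p => ¬ G.Adj p.1 p.2).card
      + ((eZ G u v ×ˢ eY G u v).filter fun p => ¬ G.Adj p.1 p.2).card
      + ((eX G u v ×ˢ eX G u v).filter fun p => G.Adj p.1 p.2).card
      + ((eY G u v ×ˢ eY G u v).filter fun p => G.Adj p.1 p.2).card := by
  have hXZ := hXZ' G u v
  have hYZ := hYZ' G u v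
  have hXY := hXY' G u v
  rw [Finset.card_union_of_disjoint, Finset.card_union_of_disjoint,
    Finset.card_union_of_disjoint, Finset.card_union_of_disjoint,
    Finset.card_union_of_disjoint]
  · ring
  all_goals repeat' refine Finset.disjoint_union_right.mpr ⟨?_, ?_⟩
  all_goals refine disj_filter_prod (fun x y h1 h2 h3 h4 => ?_)
  all_goals first
    | exact hXY x h1 h3 | exact hXY x h3 h1 | exact hXZ x h1 h3 | exact hXZ x h3 h1
    | exact hYZ x h1 h3 | exact hYZ x h3 h1 | exact hXY y h2 h4 | exact hXY y h4 h2
    | exact hXZ y h2 h4 | exact hXZ y h4 h2 | exact hYZ y h2 h4 | exact hYZ y h4 h2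

/-- Theorem 2, Table 3, tailed-triangle row: the number of unordered pairs
`{v₁,v₂} ⊆ adj({u,v})` such that the induced subgraph on `{u,v,v₁,v₂}` is a tailed triangle
(a triangle plus a pendant vertex attached to one triangle vertex) equals
`(n_x + n_y)·n_z − m(X,Z) − m(Y,Z) + m(X,X) + m(Y,Y)`. -/
theorem stmt8 [Fintype V] [DecidableEq V] (G : SimpleGraph V) [DecidableRel G.Adj]
    (u v : V) (huv : G.Adj u v) :
    (((((adjW G {u, v}) ×ˢ (adjW G {u, v})).filter fun p =>
        p.1 ≠ p.2 ∧
        ∃ a b c d : V, ({a, b, c, d} : Finset V) = {u, v, p.1, p.2} ∧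
          G.Adj a b ∧ G.Adj a c ∧ G.Adj b c ∧ G.Adj a d ∧ ¬ G.Adj b d ∧ ¬ G.Adj c d).image
      fun p => ({p.1, p.2} : Finset V)).card : ℤ)
      = (((eX G u v).card : ℤ) + (eY G u v).card) * (eZ G u v).card
        - mE G (eX G u v) (eZ G u v) - mE G (eY G u v) (eZ G u v)
        + mE G (eX G u v) (eX G u v) + mE G (eY G u v) (eY G u v) := by
  have hc1 : ((eX G u v ×ˢ eZ G u v).filter fun p => G.Adj p.1 p.2).card
      + ((eX G u v ×ˢ eZ G u v).filter fun p => ¬ G.Adj p.1 p.2).card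
      = (eX G u v).card * (eZ G u v).card := by
    rw [Finset.card_filter_add_card_filter_not, Finset.card_product]
  have hc2 : ((eY G u v ×ˢ eZ G u v).filter fun p => G.Adj p.1 p.2).card
      + ((eY G u v ×ˢ eZ G u v).filter fun p => ¬ G.Adj p.1 p.2).card
      = (eY G u v).card * (eZ G u v).card := by
    rw [Finset.card_filter_add_card_filter_not, Finset.card_product]
  have hs1 := card_filter_prod_swap G (eZ G u v) (eX G u v)
  have hs2 := card_filter_prod_swap G (eZ G u v) (eY G u v)
  have hm1 := mE_eq_card_of_disjoint G (hXZ' G u v)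
  have hm2 := mE_eq_card_of_disjoint G (hYZ' G u v)
  have hd1 := mE_diag G (eX G u v)
  have hd2 := mE_diag G (eY G u v)
  have h2N := A_two_to_one G u v
  have hcard := congrArg Finset.card (A_eq_union G u v huv)
  rw [union_card G u v] at hcard
  rw [h2N] at hcard
  have hexp : (((eX G u v).card : ℤ) + (eY G u v).card) * (eZ G u v).card
      = ((eX G u v).card * (eZ G u v).card : ℕ) + ((eY G u v).card * (eZ G u v).card : ℕ) := by
    push_cast; ring
  rw [hexp]
  rw [← hc1, ← hc2, hm1, hm2]
  push_cast
  omega
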